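/- Let X and F be nonempty finite sets and g : X × F → ℝ. Consider any sequences (x_k) in X, (u_k) in F and (S_k) of subsets of F satisfying: S_0 = {u_0'} for some u_0' ∈ F; for each k, x_k minimizes x ↦ max_{u ∈ S_k} g(x, u) over X; u_k maximizes u ↦ g(x_k, u) over F; and S_{k+1} = S_k ∪ {u_k}. Then there exists an index k ≤ |F| such that u_k ∈ S_k, and for this k the point x_k minimizes the full robust objective x ↦ max_{u ∈ F} g(x, u) over X. Hence the column-and-constraint generation iteration terminates with an optimal first-stage decision after at most |F| iterations. (Abstract form of Propositions 1 and 2: finite convergence of the DDCCG/C&CG loop with iteration count bounded by the number of extreme scenarios.) -/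
import Mathlib


/-- Finite convergence of the column-and-constraint generation loop: starting
from a single scenario and adding, at each iteration, a worst-case scenario
for the current master solution, some iteration `k ≤ |F|` produces a repeated
scenario `u k ∈ S k`, and at that iteration the master solution `x k`
minimizes the full robust objective `x ↦ max_{u ∈ F} g (x, u)` over `X`. -/
theorem ccg_finite_convergence
    {ι κ : Type*} [DecidableEq κ]
    (X : Finset ι) (hX : X.Nonempty)
    (F : Finset κ) (hF : F.Nonempty)
    (g : ι → κ → ℝ)
    (x : ℕ → ι) (u : ℕ → κ) (S : ℕ → Finset κ)
    (u0 : κ) (hu0 : u0 ∈ F)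
    (hS0 : S 0 = {u0})
    (hSrec : ∀ k : ℕ, S (k + 1) = insert (u k) (S k))
    (hxmem : ∀ k : ℕ, x k ∈ X)
    (hxmin : ∀ k : ℕ, ∀ x' ∈ X,
      sSup (g (x k) '' (S k : Set κ)) ≤ sSup (g x' '' (S k : Set κ)))
    (humem : ∀ k : ℕ, u k ∈ F)
    (humax : ∀ k : ℕ, ∀ v ∈ F, g (x k) v ≤ g (x k) (u k)) :
    ∃ k : ℕ, k ≤ F.card ∧ u k ∈ S k ∧
      ∀ x' ∈ X, F.sup' hF (g (x k)) ≤ F.sup' hF (g x') := by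
  have hSsub : ∀ k, S k ⊆ F := by
    intro k
    induction k with
    | zero => rw [hS0]; intro a ha; simp at ha; subst ha; exact hu0
    | succ n ih =>
      rw [hSrec]
      exact Finset.insert_subset (humem n) ih
  have hSne : ∀ k, (S k).Nonempty := by
    intro k
    induction k with
    | zero => rw [hS0]; exact Finset.singleton_nonempty _
    | succ n ih => rw [hSrec]; exact Finset.insert_nonempty _ _
  -- pigeonhole: find k ≤ F.card with u k ∈ S k
  have hcard : ∀ k, (∀ j < k, u j ∉ S j) → k + 1 ≤ (S k).card := by
    intro k
    induction k with
    | zero => intro _; rw [hS0]; simp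
    | succ n ih =>
      intro h
      have h1 : n + 1 ≤ (S n).card := ih fun j hj => h j (Nat.lt_succ_of_lt hj)
      rw [hSrec, Finset.card_insert_of_notMem (h n (Nat.lt_succ_self n))]
      omega
  have hex : ∃ k ≤ F.card, u k ∈ S k := by
    by_contra hc
    push_neg at hc
    have := hcard F.card fun j hj => hc j (le_of_lt hj)
    have := Finset.card_le_card (hSsub F.card)
    omega
  obtain ⟨k, hk, hmem⟩ := hex
  refine ⟨k, hk, hmem, fun x' hx' => ?_⟩
  have key := hxmin k x' hx'
  rw [← Finset.sup'_eq_csSup_image _ (hSne k), ← Finset.sup'_eq_csSup_image _ (hSne k)] at key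
  have h1 : F.sup' hF (g (x k)) ≤ (S k).sup' (hSne k) (g (x k)) := by
    refine le_trans (Finset.sup'_le _ _ fun v hv => humax k v hv) ?_
    exact Finset.le_sup' _ hmem
  have h2 : (S k).sup' (hSne k) (g x') ≤ F.sup' hF (g x') :=
    Finset.sup'_le _ _ fun v hv => Finset.le_sup' _ (hSsub k hv)
  exact le_trans h1 (le_trans key h2)
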